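/- The two-variable polynomial F(e_1,e_2) is divisible by R(e_1)·R(e_2) in ℂ[e_1,e_2]. -/
import Mathlib


open MvPolynomial

/-- The polynomial `N(x) = Σ_{i=0}^{2g+2} ν_{2i} x^{2g+2-i}` as a function. -/
noncomputable def Nfun (g : ℕ) (ν : ℤ → ℂ) (x : ℂ) : ℂ :=
  ∑ i ∈ Finset.range (2*g+3), ν (2*(i:ℤ)) * x^(2*g+2-i)

/-- `R(x) = (x-a)(x-x₁)⋯(x-x_g)` as a function. -/
noncomputable def Rfun (g : ℕ) (a : ℂ) (x : Fin g → ℂ) (e : ℂ) : ℂ :=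
  (e - a) * ∏ i, (e - x i)

/-- `N(e_v)` as a polynomial in `ℂ[e₁,e₂]` (variable `v`). -/
noncomputable def Npoly (g : ℕ) (ν : ℤ → ℂ) (v : Fin 2) : MvPolynomial (Fin 2) ℂ :=
  ∑ i ∈ Finset.range (2*g+3), C (ν (2*(i:ℤ))) * (X v)^(2*g+2-i)

/-- `f(e₁,e₂) = Σ_{i=0}^{g+1} e₁^i e₂^i (2ν_{4g+4-4i} + ν_{4g+2-4i}(e₁+e₂))` in `ℂ[e₁,e₂]`. -/
noncomputable def fpoly (g : ℕ) (ν : ℤ → ℂ) : MvPolynomial (Fin 2) ℂ :=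
  ∑ i ∈ Finset.range (g+2), (X 0)^i * (X 1)^i *
    (C (2 * ν (4*(g:ℤ)+4-4*(i:ℤ))) + C (ν (4*(g:ℤ)+2-4*(i:ℤ))) * (X 0 + X 1))

/-- `R(e_v)` as a polynomial in `ℂ[e₁,e₂]` (variable `v`). -/
noncomputable def Rpoly (g : ℕ) (a : ℂ) (x : Fin g → ℂ) (v : Fin 2) : MvPolynomial (Fin 2) ℂ :=
  (X v - C a) * ∏ i, (X v - C (x i))

/-- `R(e₁)R(e₂)∇(e₁,e₂)` as a polynomial in `ℂ[e₁,e₂]`, where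
`∇(e₁,e₂) = Σᵢ yᵢ/((e₁-xᵢ)(e₂-xᵢ)R'(xᵢ))`. -/
noncomputable def Spoly (g : ℕ) (a : ℂ) (x y : Fin g → ℂ) : MvPolynomial (Fin 2) ℂ :=
  ∑ i : Fin g, C (y i / deriv (Rfun g a x) (x i)) *
    ((X 0 - C a) * ∏ j ∈ Finset.univ.erase i, (X 0 - C (x j))) *
    ((X 1 - C a) * ∏ j ∈ Finset.univ.erase i, (X 1 - C (x j)))

/-- `F(e₁,e₂) = f(e₁,e₂)R(e₁)R(e₂) + (e₁-e₂)²R(e₁)²R(e₂)²∇(e₁,e₂)² - N(e₁)R(e₂)² - N(e₂)R(e₁)²`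
as a polynomial in `ℂ[e₁,e₂]`. -/
noncomputable def Fpoly (g : ℕ) (ν : ℤ → ℂ) (a : ℂ) (x y : Fin g → ℂ) :
    MvPolynomial (Fin 2) ℂ :=
  fpoly g ν * Rpoly g a x 0 * Rpoly g a x 1
    + (X 0 - X 1)^2 * (Spoly g a x y)^2
    - Npoly g ν 0 * (Rpoly g a x 1)^2 - Npoly g ν 1 * (Rpoly g a x 0)^2

noncomputable def ev (c : ℂ) : MvPolynomial (Fin 2) ℂ →ₐ[ℂ] MvPolynomial (Fin 1) ℂ :=
  aeval ![MvPolynomial.C c, MvPolynomial.X 0]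

lemma ev_X0 (c : ℂ) : ev c (X 0) = C c := by simp [ev]
lemma ev_X1 (c : ℂ) : ev c (X 1) = X 0 := by simp [ev]

lemma eval_finSuccEquiv (c : ℂ) (p : MvPolynomial (Fin 2) ℂ) :
    Polynomial.eval (C c) (finSuccEquiv ℂ 1 p) = ev c p := by
  have h : (Polynomial.evalRingHom (C c : MvPolynomial (Fin 1) ℂ)).comp
      ((finSuccEquiv ℂ 1) : MvPolynomial (Fin 2) ℂ →+* Polynomial (MvPolynomial (Fin 1) ℂ))
      = (ev c).toRingHom := by
    apply ringHom_ext
    · intro r; simp [ev, finSuccEquiv_apply]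
    · intro i
      fin_cases i
      · simp [ev, finSuccEquiv_apply]
      · show Polynomial.eval _ ((finSuccEquiv ℂ 1) (X (Fin.succ 0))) = ev c (X (Fin.succ 0))
        rw [finSuccEquiv_X_succ]
        simp [ev]
  exact RingHom.congr_fun h p

lemma finSuccEquiv_C' (c : ℂ) : finSuccEquiv ℂ 1 (C c) = Polynomial.C (C c) := by
  simp [finSuccEquiv_apply]

lemma X0_sub_C_dvd_iff (c : ℂ) (p : MvPolynomial (Fin 2) ℂ) :
    (X 0 - C c) ∣ p ↔ ev c p = 0 := by
  rw [← eval_finSuccEquiv, ← map_dvd_iff (finSuccEquiv ℂ 1), map_sub, finSuccEquiv_X_zero,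
    finSuccEquiv_C', Polynomial.dvd_iff_isRoot, Polynomial.IsRoot.def]

lemma deriv_Rfun (g : ℕ) (a : ℂ) (x : Fin g → ℂ) (k : Fin g) :
    deriv (Rfun g a x) (x k)
      = (x k - a) * ∏ j ∈ Finset.univ.erase k, (x k - x j) := by
  classical
  set q : Polynomial ℂ :=
    (Polynomial.X - Polynomial.C a) * ∏ j ∈ Finset.univ.erase k, (Polynomial.X - Polynomial.C (x j)) with hq
  have hR : Rfun g a x = fun e => ((Polynomial.X - Polynomial.C (x k)) * q).eval e := by
    funext e
    simp only [Rfun, hq, Polynomial.eval_mul, Polynomial.eval_sub, Polynomial.eval_X,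
      Polynomial.eval_C, Polynomial.eval_prod]
    rw [← Finset.mul_prod_erase Finset.univ _ (Finset.mem_univ k)]
    ring
  rw [hR, Polynomial.deriv]
  simp [Polynomial.derivative_mul, hq, Polynomial.eval_prod]

lemma ev_Npoly0 (g : ℕ) (ν : ℤ → ℂ) (c : ℂ) :
    ev c (Npoly g ν 0) = C (Nfun g ν c) := by
  rw [Npoly, Nfun, map_sum, map_sum C]
  refine Finset.sum_congr rfl fun i _ => ?_
  rw [C_mul, C_pow]
  simp [ev]

lemma ev_R0 (g : ℕ) (a c : ℂ) (x : Fin g → ℂ) :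
    ev c (Rpoly g a x 0) = C (Rfun g a x c) := by
  simp only [Rpoly, Rfun, map_mul, map_sub, map_prod, ev_X0, C_mul, C_sub]
  simp [ev, C_sub, algebraMap_eq]

lemma ev_R1 (g : ℕ) (a c : ℂ) (x : Fin g → ℂ) :
    ev c (Rpoly g a x 1) = (X 0 - C a) * ∏ i, (X 0 - C (x i)) := by
  simp [ev, Rpoly, map_prod]

lemma ev_Spoly (g : ℕ) (a c : ℂ) (x y : Fin g → ℂ) :
    ev c (Spoly g a x y) = ∑ i : Fin g,
      C (y i / deriv (Rfun g a x) (x i) * ((c - a) * ∏ j ∈ Finset.univ.erase i, (c - x j))) *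
        ((X 0 - C a) * ∏ j ∈ Finset.univ.erase i, (X 0 - C (x j))) := by
  rw [Spoly, map_sum]
  refine Finset.sum_congr rfl fun i _ => ?_
  simp only [ev, map_mul, map_sub, map_prod, aeval_X, aeval_C, algebraMap_eq,
    Matrix.cons_val_zero, Matrix.cons_val_one, Matrix.head_cons, C_mul, C_sub]

lemma ev_F_a (g : ℕ) (ν : ℤ → ℂ) (a : ℂ) (x y : Fin g → ℂ) (ha : Nfun g ν a = 0) :
    ev a (Fpoly g ν a x y) = 0 := by
  have hR0 : ev a (Rpoly g a x 0) = 0 := by rw [ev_R0]; simp [Rfun]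
  have hS : ev a (Spoly g a x y) = 0 := by
    rw [ev_Spoly]
    exact Finset.sum_eq_zero fun i _ => by simp
  rw [Fpoly]
  simp only [map_sub, map_add, map_mul, map_pow, hR0, hS, ev_Npoly0, ha, map_zero]
  ring

lemma ev_F_x (g : ℕ) (ν : ℤ → ℂ) (a : ℂ) (x y : Fin g → ℂ)
    (hxy : ∀ i, (y i)^2 = Nfun g ν (x i)) (hx : Function.Injective x)
    (hxa : ∀ i, x i ≠ a) (k : Fin g) :
    ev (x k) (Fpoly g ν a x y) = 0 := by
  classical
  have hD : deriv (Rfun g a x) (x k)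
      = (x k - a) * ∏ j ∈ Finset.univ.erase k, (x k - x j) := deriv_Rfun g a x k
  have hDne : (x k - a) * ∏ j ∈ Finset.univ.erase k, (x k - x j) ≠ 0 := by
    refine mul_ne_zero (sub_ne_zero.2 (hxa k)) (Finset.prod_ne_zero_iff.2 fun j hj => ?_)
    have hjk : j ≠ k := (Finset.mem_erase.1 hj).1
    exact sub_ne_zero.2 fun he => hjk (hx he).symm
  have hR0 : ev (x k) (Rpoly g a x 0) = 0 := by
    rw [ev_R0, Rfun, Finset.prod_eq_zero (Finset.mem_univ k) (sub_self (x k))]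
    simp
  have hS : ev (x k) (Spoly g a x y)
      = C (y k) * ((X 0 - C a) * ∏ j ∈ Finset.univ.erase k, (X 0 - C (x j))) := by
    rw [ev_Spoly, Finset.sum_eq_single k]
    · rw [hD, div_mul_cancel₀ _ hDne]
    · intro i _ hik
      have hk : k ∈ Finset.univ.erase i := Finset.mem_erase.2 ⟨fun h => hik h.symm, Finset.mem_univ k⟩
      rw [Finset.prod_eq_zero hk (sub_self (x k))]
      simp
    · intro h; exact absurd (Finset.mem_univ k) h
  have hN : Nfun g ν (x k) = (y k)^2 := (hxy k).symm
  rw [Fpoly]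
  simp only [map_sub, map_add, map_mul, map_pow, hR0, hS, ev_Npoly0, hN, ev_R1, ev_X0, ev_X1]
  rw [← Finset.mul_prod_erase Finset.univ _ (Finset.mem_univ k)]
  ring

section swapsec

local notation "sw" => rename (Equiv.swap (0 : Fin 2) 1)

lemma sw_X0 : sw (X 0 : MvPolynomial (Fin 2) ℂ) = X 1 := by
  rw [rename_X, Equiv.swap_apply_left]

lemma sw_X1 : sw (X 1 : MvPolynomial (Fin 2) ℂ) = X 0 := by
  rw [rename_X, Equiv.swap_apply_right]

lemma sw_N (g : ℕ) (ν : ℤ → ℂ) :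
    sw (Npoly g ν 0) = Npoly g ν 1 ∧ sw (Npoly g ν 1) = Npoly g ν 0 := by
  constructor <;>
  · rw [Npoly, map_sum]
    refine Finset.sum_congr rfl fun i _ => ?_
    simp [Npoly, sw_X0, sw_X1, rename_C, map_pow]

lemma sw_R (g : ℕ) (a : ℂ) (x : Fin g → ℂ) :
    sw (Rpoly g a x 0) = Rpoly g a x 1 ∧ sw (Rpoly g a x 1) = Rpoly g a x 0 := by
  constructor <;>
  · rw [Rpoly, map_mul, map_sub, map_prod]
    simp [Rpoly, sw_X0, sw_X1, rename_C]

lemma sw_f (g : ℕ) (ν : ℤ → ℂ) : sw (fpoly g ν) = fpoly g ν := by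
  rw [fpoly, map_sum]
  refine Finset.sum_congr rfl fun i _ => ?_
  simp only [map_mul, map_add, map_pow, sw_X0, sw_X1, rename_C]
  ring

lemma sw_S (g : ℕ) (a : ℂ) (x y : Fin g → ℂ) : sw (Spoly g a x y) = Spoly g a x y := by
  rw [Spoly, map_sum]
  refine Finset.sum_congr rfl fun i _ => ?_
  simp only [map_mul, map_sub, map_prod, sw_X0, sw_X1, rename_C]
  ring

lemma sw_F (g : ℕ) (ν : ℤ → ℂ) (a : ℂ) (x y : Fin g → ℂ) :
    sw (Fpoly g ν a x y) = Fpoly g ν a x y := by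
  rw [Fpoly, map_sub, map_sub, map_add]
  simp only [map_mul, map_pow, map_sub, sw_X0, sw_X1, sw_f, sw_S,
    (sw_N g ν).1, (sw_N g ν).2, (sw_R g a x).1, (sw_R g a x).2]
  ring

end swapsec

lemma isCoprime_lin {c d : ℂ} (h : c ≠ d) :
    IsCoprime ((X 0 : MvPolynomial (Fin 2) ℂ) - C c) (X 0 - C d) := by
  have hdc : d - c ≠ 0 := sub_ne_zero.2 (Ne.symm h)
  refine ⟨C (d - c)⁻¹, -C (d - c)⁻¹, ?_⟩
  have h1 : (C ((d - c)⁻¹) : MvPolynomial (Fin 2) ℂ) * (C d - C c) = 1 := by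
    rw [← C_sub, ← C_mul, inv_mul_cancel₀ hdc, C_1]
  linear_combination h1

lemma R0_dvd (g : ℕ) (a : ℂ) (x : Fin g → ℂ) (hx : Function.Injective x)
    (hxa : ∀ i, x i ≠ a) (p : MvPolynomial (Fin 2) ℂ)
    (h_a : (X 0 - C a) ∣ p) (h_x : ∀ k, (X 0 - C (x k)) ∣ p) :
    Rpoly g a x 0 ∣ p := by
  classical
  rw [Rpoly]
  refine IsCoprime.mul_dvd ?_ h_a ?_
  · exact IsCoprime.prod_right fun i _ =>
      isCoprime_lin (fun he => hxa i he.symm)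
  · refine Finset.prod_dvd_of_coprime ?_ fun i _ => h_x i
    intro i _ j _ hij
    exact isCoprime_lin fun he => hij (hx he)

lemma r1_ne_zero (g : ℕ) (a : ℂ) (x : Fin g → ℂ) :
    ((X 0 : MvPolynomial (Fin 1) ℂ) - C a) * ∏ i, (X 0 - C (x i)) ≠ 0 := by
  classical
  obtain ⟨t, ht⟩ := Infinite.exists_notMem_finset (insert a (Finset.image x Finset.univ))
  intro h
  have h2 := congrArg (eval (fun _ : Fin 1 => t)) h
  simp only [map_mul, map_sub, map_prod, eval_X, eval_C, map_zero] at h2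
  rcases mul_eq_zero.1 h2 with h3 | h3
  · have h4 : t = a := sub_eq_zero.1 h3
    exact ht (by rw [h4]; exact Finset.mem_insert_self a _)
  · obtain ⟨i, _, hi⟩ := Finset.prod_eq_zero_iff.1 h3
    have : t = x i := sub_eq_zero.1 hi
    exact ht (Finset.mem_insert_of_mem (Finset.mem_image.2 ⟨i, Finset.mem_univ i, this.symm⟩))

/-- `F(e₁,e₂)` is divisible by `R(e₁)·R(e₂)` in `ℂ[e₁,e₂]`. -/
theorem stmt_3 (g : ℕ) (hg : 1 ≤ g) (ν : ℤ → ℂ) (hν0 : ν 0 ≠ 0) (hνm2 : ν (-2) = 0)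
    (a : ℂ) (ha : Nfun g ν a = 0)
    (x y : Fin g → ℂ) (hxy : ∀ i, (y i)^2 = Nfun g ν (x i))
    (hx : Function.Injective x) (hxa : ∀ i, x i ≠ a) :
    (Rpoly g a x 0 * Rpoly g a x 1) ∣ Fpoly g ν a x y := by
  classical
  have hev : ∀ c : ℂ, c = a ∨ (∃ k, c = x k) → ev c (Fpoly g ν a x y) = 0 := by
    rintro c (rfl | ⟨k, rfl⟩)
    · exact ev_F_a g ν _ x y ha
    · exact ev_F_x g ν a x y hxy hx hxa k
  have hR0F : Rpoly g a x 0 ∣ Fpoly g ν a x y :=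
    R0_dvd g a x hx hxa _
      ((X0_sub_C_dvd_iff a _).2 (hev a (Or.inl rfl)))
      (fun k => (X0_sub_C_dvd_iff (x k) _).2 (hev (x k) (Or.inr ⟨k, rfl⟩)))
  have hR1F : Rpoly g a x 1 ∣ Fpoly g ν a x y := by
    have h := map_dvd (rename (Equiv.swap (0 : Fin 2) 1)) hR0F
    rwa [(sw_R g a x).1, sw_F] at h
  obtain ⟨G, hG⟩ := hR1F
  have hevG : ∀ c : ℂ, c = a ∨ (∃ k, c = x k) → ev c G = 0 := by
    intro c hc
    have h0 : ev c (Rpoly g a x 1) * ev c G = 0 := by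
      rw [← map_mul, ← hG]; exact hev c hc
    rw [ev_R1] at h0
    rcases mul_eq_zero.1 h0 with h1 | h1
    · exact absurd h1 (r1_ne_zero g a x)
    · exact h1
  have hR0G : Rpoly g a x 0 ∣ G :=
    R0_dvd g a x hx hxa _
      ((X0_sub_C_dvd_iff a _).2 (hevG a (Or.inl rfl)))
      (fun k => (X0_sub_C_dvd_iff (x k) _).2 (hevG (x k) (Or.inr ⟨k, rfl⟩)))
  obtain ⟨H, hH⟩ := hR0G
  exact ⟨H, by rw [hG, hH]; ring⟩
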